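/- Let 𝒜 be an abelian length category and [𝒰, 𝒯] a wide interval in tors 𝒜, i.e., 𝒲 := 𝒰^⊥ ∩ 𝒯 is a wide subcategory of 𝒜. Then the maps Φ(𝒱) := 𝒰^⊥ ∩ 𝒱 and Ψ(𝒳) := T(𝒰 ∪ 𝒳) are mutually inverse isomorphisms of complete lattices between the interval [𝒰, 𝒯] in tors 𝒜 and the lattice tors 𝒲 of torsion classes in the abelian category 𝒲. -/

import Mathlib

open CategoryTheory CategoryTheory.Limits

universe v u

attribute [local instance] CategoryTheory.Abelian.hasFiniteBiproducts

variable (C : Type u) [Category.{v} C] [Abelian C]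

/-- The right Hom-perpendicular category of a class of objects. -/
def RPerp (X : Set C) : Set C := {Y | ∀ A ∈ X, ∀ f : A ⟶ Y, f = 0}

/-- The left Hom-perpendicular category of a class of objects. -/
def LPerp (X : Set C) : Set C := {Y | ∀ A ∈ X, ∀ f : Y ⟶ A, f = 0}

/-- A torsion class: a class of objects containing the zero objects and closed under
quotients and extensions. -/
structure IsTorsionClass (T : Set C) : Prop where
  zero_mem : ∀ Z : C, IsZero Z → Z ∈ T
  quot_mem : ∀ ⦃A B : C⦄ (f : A ⟶ B), Epi f → A ∈ T → B ∈ T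
  ext_mem : ∀ E : ShortComplex C, E.ShortExact → E.X₁ ∈ T → E.X₃ ∈ T → E.X₂ ∈ T

/-- A torsion-free class: a class of objects containing the zero objects and closed under
subobjects and extensions. -/
structure IsTorsionFreeClass (F : Set C) : Prop where
  zero_mem : ∀ Z : C, IsZero Z → Z ∈ F
  sub_mem : ∀ ⦃A B : C⦄ (f : A ⟶ B), Mono f → B ∈ F → A ∈ F
  ext_mem : ∀ E : ShortComplex C, E.ShortExact → E.X₁ ∈ F → E.X₃ ∈ F → E.X₂ ∈ F

/-- The smallest torsion class containing a class of objects. -/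
def torsClosure (X : Set C) : Set C := ⋂₀ {T | IsTorsionClass C T ∧ X ⊆ T}

/-- The smallest torsion-free class containing a class of objects. -/
def torfClosure (X : Set C) : Set C := ⋂₀ {F | IsTorsionFreeClass C F ∧ X ⊆ F}

/-- `ExtStar U W` is the class of objects `X` admitting a short exact sequence
`0 → U' → X → W' → 0` with `U' ∈ U` and `W' ∈ W`. -/
def ExtStar (U W : Set C) : Set C :=
  {X | ∃ E : ShortComplex C, E.ShortExact ∧ E.X₁ ∈ U ∧ E.X₃ ∈ W ∧ Nonempty (E.X₂ ≅ X)}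

/-- The additive closure of a class of objects: direct summands of finite direct sums. -/
def AddClosure (S : Set C) : Set C :=
  {X | ∃ (n : ℕ) (c : Fin n → C), (∀ i, c i ∈ S) ∧ ∃ f : (⨁ c) ⟶ X, IsSplitEpi f}

/-- Membership in the filtration closure `Filt S`: objects admitting a finite filtration
with subquotients in `AddClosure S`. -/
inductive FiltMem (S : Set C) : C → Prop
  | of_isZero (X : C) : IsZero X → FiltMem S X
  | ext (E : ShortComplex C) : E.ShortExact → FiltMem S E.X₁ →
      E.X₃ ∈ AddClosure C S → FiltMem S E.X₂
  | of_iso (X Y : C) (e : X ≅ Y) : FiltMem S X → FiltMem S Y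

/-- The filtration closure of a class of objects. -/
def Filt (S : Set C) : Set C := {X | FiltMem C S X}

/-- The class of quotients of objects of the additive closure of `S`. -/
def Fac (S : Set C) : Set C := {X | ∃ A ∈ AddClosure C S, ∃ f : A ⟶ X, Epi f}

/-- The class of subobjects of objects of the additive closure of `S`. -/
def Subm (S : Set C) : Set C := {X | ∃ A ∈ AddClosure C S, ∃ f : X ⟶ A, Mono f}

/-- A wide subcategory: closed under kernels, cokernels and extensions
(and containing the zero objects). -/
structure IsWide (W : Set C) : Prop where
  zero_mem : ∀ Z : C, IsZero Z → Z ∈ W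
  ker_mem : ∀ ⦃X Y : C⦄ (f : X ⟶ Y), X ∈ W → Y ∈ W → kernel f ∈ W
  coker_mem : ∀ ⦃X Y : C⦄ (f : X ⟶ Y), X ∈ W → Y ∈ W → cokernel f ∈ W
  ext_mem : ∀ E : ShortComplex C, E.ShortExact → E.X₁ ∈ W → E.X₃ ∈ W → E.X₂ ∈ W

/-- A brick: a nonzero object all of whose nonzero endomorphisms are invertible
(equivalently, the endomorphism ring is a division ring). -/
def IsBrick (S : C) : Prop := ¬ IsZero S ∧ ∀ f : S ⟶ S, f = 0 ∨ IsIso f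

/-- A simple object of the full abelian subcategory determined by a wide subcategory `W`. -/
def IsSimpleIn (W : Set C) (S : C) : Prop :=
  S ∈ W ∧ ¬ IsZero S ∧ ∀ ⦃A : C⦄ (f : A ⟶ S), A ∈ W → Mono f → IsZero A ∨ IsIso f

/-- A Hasse arrow `T → U` in the poset of torsion classes: `U ⊊ T` are adjacent. -/
def IsHasseArrow (T U : Set C) : Prop :=
  IsTorsionClass C T ∧ IsTorsionClass C U ∧ U ⊂ T ∧
    ∀ V : Set C, IsTorsionClass C V → U ⊆ V → V ⊆ T → V = U ∨ V = T

/-- A Hasse arrow `F → G` in the poset of torsion-free classes: `G ⊊ F` are adjacent. -/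
def IsHasseArrowTorf (F G : Set C) : Prop :=
  IsTorsionFreeClass C F ∧ IsTorsionFreeClass C G ∧ G ⊂ F ∧
    ∀ H : Set C, IsTorsionFreeClass C H → G ⊆ H → H ⊆ F → H = G ∨ H = F

/-- The brick label of a Hasse arrow `T → U` of torsion classes:
the unique brick in `U^⊥ ∩ T`. -/
def IsBrickLabel (T U : Set C) (S : C) : Prop := IsBrick C S ∧ S ∈ RPerp C U ∩ T

/-- The brick label of a Hasse arrow `F → G` of torsion-free classes:
the unique brick in `^⊥G ∩ F`. -/
def IsBrickLabelTorf (F G : Set C) (S : C) : Prop := IsBrick C S ∧ S ∈ LPerp C G ∩ F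

/-- The left wide subcategory of a torsion class. -/
def WL (T : Set C) : Set C :=
  {X | X ∈ T ∧ ∀ ⦃Y : C⦄ (g : Y ⟶ X), Y ∈ T → kernel g ∈ T}

/-- The right wide subcategory of a torsion-free class. -/
def WR (F : Set C) : Set C :=
  {X | X ∈ F ∧ ∀ ⦃Y : C⦄ (f : X ⟶ Y), Y ∈ F → cokernel f ∈ F}

/-- A Serre subcategory of the abelian category given by a wide subcategory `W`:
closed under extensions, subobjects and quotients within `W`. -/
structure IsSerreIn (W S : Set C) : Prop where
  subset : S ⊆ W
  zero_mem : ∀ Z : C, IsZero Z → Z ∈ S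
  sub_mem : ∀ ⦃A X : C⦄ (f : A ⟶ X), Mono f → A ∈ W → X ∈ S → A ∈ S
  quot_mem : ∀ ⦃X B : C⦄ (f : X ⟶ B), Epi f → B ∈ W → X ∈ S → B ∈ S
  ext_mem : ∀ E : ShortComplex C, E.ShortExact → E.X₂ ∈ W →
    E.X₁ ∈ S → E.X₃ ∈ S → E.X₂ ∈ S

/-- A torsion class of the abelian category given by a wide subcategory `W`:
a subclass of `W` containing the zero objects and closed under quotients in `W`
and extensions. -/
structure IsTorsionClassIn (W X : Set C) : Prop where
  subset : X ⊆ W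
  zero_mem : ∀ Z : C, IsZero Z → Z ∈ X
  quot_mem : ∀ ⦃A B : C⦄ (f : A ⟶ B), Epi f → A ∈ X → B ∈ W → B ∈ X
  ext_mem : ∀ E : ShortComplex C, E.ShortExact → E.X₁ ∈ X → E.X₃ ∈ X → E.X₂ ∈ X
section Auxiliary

variable {C : Type u} [Category.{v} C] [Abelian C]

lemma rperp_sub {U : Set C} {A B : C} (f : A ⟶ B) (hf : Mono f) (hB : B ∈ RPerp C U) :
    A ∈ RPerp C U := by
  intro X hX g
  have h : (g ≫ f) = 0 := hB X hX (g ≫ f)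
  rw [← cancel_mono f, h, zero_comp]

lemma rperp_ext {U : Set C} (E : ShortComplex C) (hE : E.ShortExact) (h1 : E.X₁ ∈ RPerp C U)
    (h3 : E.X₃ ∈ RPerp C U) : E.X₂ ∈ RPerp C U := by
  intro A hA g
  haveI := hE.mono_f
  obtain ⟨l, hl⟩ := KernelFork.IsLimit.lift' hE.exact.fIsKernel g (h3 A hA _)
  rw [← hl, h1 A hA l, zero_comp]

lemma tors_iso_mem {T : Set C} (hT : IsTorsionClass C T) {A B : C} (e : A ≅ B) (hA : A ∈ T) :
    B ∈ T :=
  hT.quot_mem e.hom inferInstance hA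

lemma shortExact_mk_cokernel {A B : C} (f : A ⟶ B) [Mono f] :
    (ShortComplex.mk f (cokernel.π f) (cokernel.condition f)).ShortExact where
  exact := ShortComplex.exact_of_g_is_cokernel _ (cokernelIsCokernel f)
  mono_f := ‹_›
  epi_g := by dsimp; infer_instance

lemma torsClosure_isTorsionClass (S : Set C) : IsTorsionClass C (torsClosure C S) where
  zero_mem Z hZ := fun T' hT' => hT'.1.zero_mem Z hZ
  quot_mem _ _ f hf hA := fun T' hT' => hT'.1.quot_mem f hf (hA T' hT')
  ext_mem E hE h1 h3 := fun T' hT' => hT'.1.ext_mem E hE (h1 T' hT') (h3 T' hT')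

lemma subset_torsClosure (S : Set C) : S ⊆ torsClosure C S :=
  fun _ hx _ hT' => hT'.2 hx

lemma torsClosure_min {S T' : Set C} (hT' : IsTorsionClass C T') (h : S ⊆ T') :
    torsClosure C S ⊆ T' :=
  fun _ hx => hx T' ⟨hT', h⟩

lemma torsClosure_mono {S S' : Set C} (h : S ⊆ S') : torsClosure C S ⊆ torsClosure C S' :=
  fun _ hx T' hT' => hx T' ⟨hT'.1, h.trans hT'.2⟩

lemma exists_torsion_ses [Noetherian C] {U : Set C} (hU : IsTorsionClass C U) (Xo : C) :
    ∃ (t : C) (f : t ⟶ Xo), Mono f ∧ t ∈ U ∧ cokernel f ∈ RPerp C U := by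
  classical
  let S : Set (Subobject Xo) := {s | (s : C) ∈ U}
  have hbot : (⊥ : Subobject Xo) ∈ S :=
    hU.zero_mem _ ((isZero_zero C).of_iso Subobject.botCoeIsoZero)
  obtain ⟨t, htS, hmax⟩ :=
    (wellFounded_gt (α := Subobject Xo)).has_min S ⟨⊥, hbot⟩
  refine ⟨(t : C), t.arrow, inferInstance, htS, ?_⟩
  intro A hA g
  let ψ : ((t : C) ⊞ pullback g (cokernel.π t.arrow)) ⟶ Xo := biprod.desc t.arrow (pullback.snd g (cokernel.π t.arrow))
  let φ : ((t : C) ⊞ pullback g (cokernel.π t.arrow)) ⟶ ((imageSubobject ψ : C)) := factorThruImageSubobject ψ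
  have hφ : φ ≫ (imageSubobject ψ).arrow = ψ := imageSubobject_arrow_comp ψ
  have h_tN : t ≤ imageSubobject ψ := by
    refine Subobject.le_of_comm (biprod.inl ≫ φ) ?_
    rw [Category.assoc, hφ]
    simp [ψ]
  let o := Subobject.ofLE t (imageSubobject ψ) h_tN
  have ho : o ≫ (imageSubobject ψ).arrow = t.arrow := Subobject.ofLE_arrow h_tN
  haveI hmono_o : Mono o := by
    have : Mono (o ≫ (imageSubobject ψ).arrow) := by rw [ho]; infer_instance
    exact mono_of_mono o (imageSubobject ψ).arrow
  have fact1 : biprod.inl ≫ φ = o := by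
    rw [← cancel_mono (imageSubobject ψ).arrow, Category.assoc, hφ, ho]
    simp [ψ]
  have hinl : biprod.inl ≫ (φ ≫ cokernel.π o) = 0 := by
    rw [← Category.assoc, fact1, cokernel.condition]
  let e' : pullback g (cokernel.π t.arrow) ⟶ cokernel o := biprod.inr ≫ (φ ≫ cokernel.π o)
  have h2 : φ ≫ cokernel.π o = biprod.snd ≫ e' := by
    apply biprod.hom_ext' <;> simp [e', hinl]
  have he'epi : Epi e' := by
    have h3 : Epi (φ ≫ cokernel.π o) := epi_comp _ _
    rw [h2] at h3
    haveI := h3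
    exact epi_of_epi (biprod.snd : (t : C) ⊞ pullback g (cokernel.π t.arrow) ⟶ _) e'
  have h3 : (kernel.ι (pullback.fst g (cokernel.π t.arrow)) ≫ pullback.snd g (cokernel.π t.arrow)) ≫ cokernel.π t.arrow = 0 := by
    rw [Category.assoc, ← pullback.condition, ← Category.assoc, kernel.condition, zero_comp]
  have hu := Abelian.monoLift_comp t.arrow (kernel.ι (pullback.fst g (cokernel.π t.arrow)) ≫ pullback.snd g (cokernel.π t.arrow)) h3
  set u := Abelian.monoLift t.arrow (kernel.ι (pullback.fst g (cokernel.π t.arrow)) ≫ pullback.snd g (cokernel.π t.arrow)) h3 with hu_def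
  have h4 : kernel.ι (pullback.fst g (cokernel.π t.arrow)) ≫ biprod.inr ≫ φ = u ≫ o := by
    rw [← cancel_mono (imageSubobject ψ).arrow]
    rw [Category.assoc, Category.assoc, hφ, Category.assoc, ho, hu]
    simp [ψ]
  have hker : kernel.ι (pullback.fst g (cokernel.π t.arrow)) ≫ e' = 0 := by
    show kernel.ι (pullback.fst g (cokernel.π t.arrow)) ≫ biprod.inr ≫ φ ≫ cokernel.π o = 0
    rw [← Category.assoc, ← Category.assoc, Category.assoc _ biprod.inr φ, h4,
      Category.assoc, cokernel.condition, comp_zero]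
  have hd := Abelian.comp_epiDesc (pullback.fst g (cokernel.π t.arrow)) e' hker
  have hdepi : Epi (Abelian.epiDesc (pullback.fst g (cokernel.π t.arrow)) e' hker) := by
    have : Epi (pullback.fst g (cokernel.π t.arrow) ≫ Abelian.epiDesc (pullback.fst g (cokernel.π t.arrow)) e' hker) := by
      rw [hd]; exact he'epi
    exact epi_of_epi (pullback.fst g (cokernel.π t.arrow)) _
  have hcok : cokernel o ∈ U := hU.quot_mem _ hdepi hA
  have hNU : ((imageSubobject ψ : C)) ∈ U :=
    hU.ext_mem (ShortComplex.mk o (cokernel.π o) (cokernel.condition o))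
      (shortExact_mk_cokernel o) htS hcok
  have hNt : imageSubobject ψ ≤ t := by
    rcases lt_or_eq_of_le h_tN with h | h
    · exact absurd h (hmax _ hNU)
    · exact h.ge
  have h6 : (imageSubobject ψ).arrow ≫ cokernel.π t.arrow = 0 := by
    rw [← Subobject.ofLE_arrow hNt, Category.assoc, cokernel.condition, comp_zero]
  have h5 : pullback.snd g (cokernel.π t.arrow) ≫ cokernel.π t.arrow = 0 := by
    have hsnd : pullback.snd g (cokernel.π t.arrow) = (biprod.inr ≫ φ) ≫ (imageSubobject ψ).arrow := by
      rw [Category.assoc, hφ]; simp [ψ]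
    rw [hsnd, Category.assoc, h6, comp_zero]
  have h7 : pullback.fst g (cokernel.π t.arrow) ≫ g = 0 := by rw [pullback.condition, h5]
  rw [← cancel_epi (pullback.fst g (cokernel.π t.arrow)), h7, comp_zero]

end Auxiliary
section Auxiliary2

variable {C : Type u} [Category.{v} C] [Abelian C]

open ZeroObject

lemma shortExact_of_parts {A B D : C} (f : A ⟶ B) (g : B ⟶ D) (w : f ≫ g = 0)
    (h1 : Mono f) (h2 : Epi g) (h3 : (ShortComplex.mk f g w).Exact) :
    (ShortComplex.mk f g w).ShortExact := by
  haveI : Mono (ShortComplex.mk f g w).f := h1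
  haveI : Epi (ShortComplex.mk f g w).g := h2
  exact ⟨h3⟩

lemma canon {U : Set C} {Y F X' t U' : C} (f₁ : t ⟶ Y) (g₁ : Y ⟶ F) (w₁ : f₁ ≫ g₁ = 0)
    (hS₁ : (ShortComplex.mk f₁ g₁ w₁).ShortExact) (ht : t ∈ U) (hF : F ∈ RPerp C U)
    (f : U' ⟶ Y) (g : Y ⟶ X') (w : f ≫ g = 0) (hS : (ShortComplex.mk f g w).ShortExact)
    (hU' : U' ∈ U) (hX' : X' ∈ RPerp C U) : Nonempty (F ≅ X') := by
  haveI : Epi g₁ := hS₁.epi_g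
  haveI : Epi g := hS.epi_g
  obtain ⟨q, hq⟩ := CokernelCofork.IsColimit.desc' hS₁.exact.gIsCokernel g (hX' t ht _)
  obtain ⟨q', hq'⟩ := CokernelCofork.IsColimit.desc' hS.exact.gIsCokernel g₁ (hF U' hU' _)
  simp only [CokernelCofork.π_ofπ] at hq hq'
  refine ⟨⟨q, q', ?_, ?_⟩⟩
  · rw [← cancel_epi g₁, ← Category.assoc, hq, hq', Category.comp_id]
  · rw [← cancel_epi g, ← Category.assoc, hq', hq, Category.comp_id]

lemma extStar_intro {U X : Set C} {t Y F : C} (f : t ⟶ Y) (g : Y ⟶ F) (w : f ≫ g = 0)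
    (hS : (ShortComplex.mk f g w).ShortExact) (ht : t ∈ U) (hF : F ∈ X) :
    Y ∈ ExtStar C U X :=
  ⟨_, hS, ht, hF, ⟨Iso.refl Y⟩⟩

lemma extStar_elim {U X : Set C} {Y : C} (hY : Y ∈ ExtStar C U X) :
    ∃ (U' X' : C) (f : U' ⟶ Y) (g : Y ⟶ X') (w : f ≫ g = 0),
      (ShortComplex.mk f g w).ShortExact ∧ U' ∈ U ∧ X' ∈ X := by
  obtain ⟨E, hE, h1, h3, ⟨e⟩⟩ := hY
  refine ⟨E.X₁, E.X₃, E.f ≫ e.hom, e.inv ≫ E.g, by simp [E.zero], ?_, h1, h3⟩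
  exact ShortComplex.shortExact_of_iso
    (ShortComplex.isoMk (Iso.refl E.X₁) e (Iso.refl E.X₃) (by simp) (by simp)) hE

lemma subset_extStar_left {U X : Set C} (hX0 : ∀ Z : C, IsZero Z → Z ∈ X) :
    U ⊆ ExtStar C U X := by
  intro A hA
  refine extStar_intro (𝟙 A) (0 : A ⟶ (0 : C)) (by simp) ?_ hA (hX0 _ (isZero_zero C))
  refine shortExact_of_parts _ _ _ inferInstance ⟨fun u v _ => (isZero_zero C).eq_of_src u v⟩ ?_
  rw [ShortComplex.exact_iff_epi _ rfl]
  dsimp; infer_instance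

lemma subset_extStar_right {U X : Set C} (hU0 : ∀ Z : C, IsZero Z → Z ∈ U) :
    X ⊆ ExtStar C U X := by
  intro A hA
  refine extStar_intro (0 : (0 : C) ⟶ A) (𝟙 A) (by simp) ?_ (hU0 _ (isZero_zero C)) hA
  refine shortExact_of_parts _ _ _ ⟨fun u v _ => (isZero_zero C).eq_of_tgt u v⟩ inferInstance ?_
  rw [ShortComplex.exact_iff_mono _ rfl]
  dsimp; infer_instance

lemma extStar_zero_mem {U X : Set C} (hU0 : ∀ Z : C, IsZero Z → Z ∈ U)
    (hX0 : ∀ Z : C, IsZero Z → Z ∈ X) (Z : C) (hZ : IsZero Z) : Z ∈ ExtStar C U X := by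
  refine extStar_intro (𝟙 Z) (𝟙 Z) (by rw [Category.comp_id]; exact hZ.eq_of_src _ _) ?_
    (hU0 _ hZ) (hX0 _ hZ)
  exact shortExact_of_parts _ _ _ inferInstance inferInstance (ShortComplex.exact_of_isZero_X₂ _ hZ)

lemma extStar_subset {U T X : Set C} (hT : IsTorsionClass C T) (hUT : U ⊆ T) (hXT : X ⊆ T) :
    ExtStar C U X ⊆ T := by
  rintro Y ⟨E, hE, h1, h3, ⟨e⟩⟩
  exact hT.quot_mem e.hom inferInstance (hT.ext_mem E hE (hUT h1) (hXT h3))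

end Auxiliary2
section Auxiliary3

variable {C : Type u} [Category.{v} C] [Abelian C]

lemma extStar_isTorsionClass [Noetherian C] {U T : Set C} (hU : IsTorsionClass C U)
    (hT : IsTorsionClass C T) (hUT : U ⊆ T) {W : Set C} (hW : W = RPerp C U ∩ T)
    (hwide : IsWide C W) {X : Set C} (hX : IsTorsionClassIn C W X) :
    IsTorsionClass C (ExtStar C U X) := by
  have hXR : X ⊆ RPerp C U := fun A hA => by
    have := hX.subset hA; rw [hW] at this; exact this.1
  have hXT : X ⊆ T := fun A hA => by
    have := hX.subset hA; rw [hW] at this; exact this.2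
  have hDT : ExtStar C U X ⊆ T := extStar_subset hT hUT hXT
  have hXiso : ∀ {A B : C}, (A ≅ B) → A ∈ X → B ∈ RPerp C U → B ∈ T → B ∈ X := by
    intro A B e hA h1 h2
    exact hX.quot_mem e.hom inferInstance hA (by rw [hW]; exact ⟨h1, h2⟩)
  constructor
  · exact extStar_zero_mem hU.zero_mem hX.zero_mem
  · -- quotients
    intro Y Z p hp hY
    haveI := hp
    obtain ⟨U', X', f, g, w, hS, hU', hX'⟩ := extStar_elim hY
    obtain ⟨tY, fY, hmY, htY, hcY⟩ := exists_torsion_ses hU Y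
    obtain ⟨tZ, fZ, hmZ, htZ, hcZ⟩ := exists_torsion_ses hU Z
    haveI := hmY; haveI := hmZ
    obtain ⟨e⟩ := canon fY (cokernel.π fY) (cokernel.condition fY) (shortExact_mk_cokernel fY)
      htY hcY f g w hS hU' (hXR hX')
    have hYT : Y ∈ T := hDT hY
    have hFY_X : cokernel fY ∈ X := hXiso e.symm hX' hcY
      (hT.quot_mem (cokernel.π fY) inferInstance hYT)
    have h0 : fY ≫ (p ≫ cokernel.π fZ) = 0 := hcZ tY htY _
    have hr : cokernel.π fY ≫ cokernel.desc fY (p ≫ cokernel.π fZ) h0 = p ≫ cokernel.π fZ :=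
      cokernel.π_desc _ _ _
    have hrepi : Epi (cokernel.desc fY (p ≫ cokernel.π fZ) h0) := by
      have h1 : Epi (cokernel.π fY ≫ cokernel.desc fY (p ≫ cokernel.π fZ) h0) := by
        rw [hr]; exact epi_comp _ _
      exact epi_of_epi (cokernel.π fY) _
    have hFZT : cokernel fZ ∈ T := hT.quot_mem (p ≫ cokernel.π fZ) (epi_comp _ _) hYT
    have hFZX : cokernel fZ ∈ X := hX.quot_mem _ hrepi hFY_X (by rw [hW]; exact ⟨hcZ, hFZT⟩)
    exact extStar_intro fZ (cokernel.π fZ) (cokernel.condition fZ)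
      (shortExact_mk_cokernel fZ) htZ hFZX
  · -- extensions
    intro E hE hA hB
    haveI := hE.mono_f; haveI := hE.epi_g
    obtain ⟨tE, fE, hmE, htE, hcE⟩ := exists_torsion_ses hU E.X₂
    obtain ⟨tA, fA, hmA, htA, hcA⟩ := exists_torsion_ses hU E.X₁
    obtain ⟨tB, fB, hmB, htB, hcB⟩ := exists_torsion_ses hU E.X₃
    haveI := hmE; haveI := hmA; haveI := hmB
    have hAT : E.X₁ ∈ T := hDT hA
    have hBT : E.X₃ ∈ T := hDT hB
    obtain ⟨Ua, Xa, fa, ga, wa, hSa, hUa, hXa⟩ := extStar_elim hA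
    obtain ⟨eA⟩ := canon fA (cokernel.π fA) (cokernel.condition fA) (shortExact_mk_cokernel fA)
      htA hcA fa ga wa hSa hUa (hXR hXa)
    have hFA_X : cokernel fA ∈ X := hXiso eA.symm hXa hcA
      (hT.quot_mem (cokernel.π fA) inferInstance hAT)
    obtain ⟨Ub, Xb, fb, gb, wb, hSb, hUb, hXb⟩ := extStar_elim hB
    obtain ⟨eB⟩ := canon fB (cokernel.π fB) (cokernel.condition fB) (shortExact_mk_cokernel fB)
      htB hcB fb gb wb hSb hUb (hXR hXb)
    have hFB_X : cokernel fB ∈ X := hXiso eB.symm hXb hcB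
      (hT.quot_mem (cokernel.π fB) inferInstance hBT)
    set m : E.X₁ ⟶ cokernel fE := E.f ≫ cokernel.π fE with hm
    have hm0 : fA ≫ m = 0 := by
      rw [hm, ← Category.assoc]
      exact hcE tA htA _
    have h8 : fA ≫ factorThruImage m = 0 := by
      rw [← cancel_mono (image.ι m), Category.assoc, image.fac, zero_comp]
      exact hm0
    have heI : cokernel.π fA ≫ cokernel.desc fA (factorThruImage m) h8 = factorThruImage m :=
      cokernel.π_desc _ _ _
    have heIepi : Epi (cokernel.desc fA (factorThruImage m) h8) := by
      have h9 : Epi (cokernel.π fA ≫ cokernel.desc fA (factorThruImage m) h8) := by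
        rw [heI]; infer_instance
      exact epi_of_epi (cokernel.π fA) _
    have hET : E.X₂ ∈ T := hT.ext_mem E hE hAT hBT
    have hFE_T : cokernel fE ∈ T := hT.quot_mem (cokernel.π fE) inferInstance hET
    have hI_R : image m ∈ RPerp C U := rperp_sub (image.ι m) inferInstance hcE
    have hI_T : image m ∈ T := hT.quot_mem (factorThruImage m) inferInstance hAT
    have hI_W : image m ∈ W := by rw [hW]; exact ⟨hI_R, hI_T⟩
    have hI_X : image m ∈ X := hX.quot_mem _ heIepi hFA_X hI_W
    have hFE_W : cokernel fE ∈ W := by rw [hW]; exact ⟨hcE, hFE_T⟩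
    have hC'_W : cokernel (image.ι m) ∈ W := hwide.coker_mem (image.ι m) hI_W hFE_W
    have hC'_R : cokernel (image.ι m) ∈ RPerp C U := by rw [hW] at hC'_W; exact hC'_W.1
    have h9 : E.f ≫ (cokernel.π fE ≫ cokernel.π (image.ι m)) = 0 := by
      have hfac : E.f ≫ cokernel.π fE = factorThruImage m ≫ image.ι m := by
        rw [image.fac, hm]
      rw [← Category.assoc, hfac, Category.assoc, cokernel.condition, comp_zero]
    obtain ⟨r, hr⟩ := CokernelCofork.IsColimit.desc' hE.exact.gIsCokernel
      (cokernel.π fE ≫ cokernel.π (image.ι m)) h9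
    simp only [CokernelCofork.π_ofπ] at hr
    have hrepi : Epi r := by
      have h10 : Epi (E.g ≫ r) := by rw [hr]; exact epi_comp _ _
      exact epi_of_epi E.g r
    have h10 : fB ≫ r = 0 := hC'_R tB htB _
    have hs : cokernel.π fB ≫ cokernel.desc fB r h10 = r := cokernel.π_desc _ _ _
    have hsepi : Epi (cokernel.desc fB r h10) := by
      have h11 : Epi (cokernel.π fB ≫ cokernel.desc fB r h10) := by rw [hs]; exact hrepi
      exact epi_of_epi (cokernel.π fB) _
    have hC'_X : cokernel (image.ι m) ∈ X := hX.quot_mem _ hsepi hFB_X hC'_W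
    have hFE_X : cokernel fE ∈ X := hX.ext_mem
      (ShortComplex.mk (image.ι m) (cokernel.π (image.ι m)) (cokernel.condition _))
      (shortExact_mk_cokernel _) hI_X hC'_X
    exact extStar_intro fE (cokernel.π fE) (cokernel.condition fE)
      (shortExact_mk_cokernel fE) htE hFE_X

end Auxiliary3
/-- For a wide interval `[U,T]` with `W = U^⊥ ∩ T`, the maps `Φ(V) = U^⊥ ∩ V` and
`Ψ(X) = T(U ∪ X)` are mutually inverse isomorphisms of complete lattices between the
interval `[U,T]` in `tors 𝒜` and `tors W`. -/
theorem stmt_9 [Noetherian C] [Artinian C]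
    (U T : Set C) (hU : IsTorsionClass C U) (hT : IsTorsionClass C T) (hUT : U ⊆ T)
    (W : Set C) (hW : W = RPerp C U ∩ T) (hwide : IsWide C W) :
    (∀ V : Set C, IsTorsionClass C V → U ⊆ V → V ⊆ T →
      IsTorsionClassIn C W (RPerp C U ∩ V)) ∧
    (∀ X : Set C, IsTorsionClassIn C W X →
      IsTorsionClass C (torsClosure C (U ∪ X)) ∧ U ⊆ torsClosure C (U ∪ X) ∧
        torsClosure C (U ∪ X) ⊆ T) ∧
    (∀ V : Set C, IsTorsionClass C V → U ⊆ V → V ⊆ T →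
      torsClosure C (U ∪ (RPerp C U ∩ V)) = V) ∧
    (∀ X : Set C, IsTorsionClassIn C W X →
      RPerp C U ∩ torsClosure C (U ∪ X) = X) ∧
    (∀ V V' : Set C, IsTorsionClass C V → U ⊆ V → V ⊆ T →
      IsTorsionClass C V' → U ⊆ V' → V' ⊆ T →
      (V ⊆ V' ↔ RPerp C U ∩ V ⊆ RPerp C U ∩ V')) := by
  have key3 : ∀ V : Set C, IsTorsionClass C V → U ⊆ V → V ⊆ T →
      torsClosure C (U ∪ (RPerp C U ∩ V)) = V := by
    intro V hV hUV hVT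
    apply Set.Subset.antisymm
    · exact torsClosure_min hV (Set.union_subset hUV Set.inter_subset_right)
    · intro Xo hXo
      obtain ⟨t, f, hmf, htU, hcf⟩ := exists_torsion_ses hU Xo
      haveI := hmf
      intro T' hT'
      exact hT'.1.ext_mem (ShortComplex.mk f (cokernel.π f) (cokernel.condition f))
        (shortExact_mk_cokernel f) (hT'.2 (Set.mem_union_left _ htU))
        (hT'.2 (Set.mem_union_right _
          ⟨hcf, hV.quot_mem (cokernel.π f) inferInstance hXo⟩))
  refine ⟨?_, ?_, key3, ?_, ?_⟩
  · -- part 1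
    intro V hV hUV hVT
    constructor
    · intro A hA
      rw [hW]
      exact ⟨hA.1, hVT hA.2⟩
    · intro Z hZ
      exact ⟨fun A _ f => hZ.eq_zero_of_tgt f, hV.zero_mem Z hZ⟩
    · intro A B f hf hA hBW
      rw [hW] at hBW
      exact ⟨hBW.1, hV.quot_mem f hf hA.2⟩
    · intro E hE h1 h3
      exact ⟨rperp_ext E hE h1.1 h3.1, hV.ext_mem E hE h1.2 h3.2⟩
  · -- part 2
    intro X hX
    refine ⟨torsClosure_isTorsionClass _,
      fun A hA => subset_torsClosure _ (Set.mem_union_left _ hA),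
      torsClosure_min hT (Set.union_subset hUT (fun A hA => ?_))⟩
    have h := hX.subset hA
    rw [hW] at h
    exact h.2
  · -- part 4
    intro X hX
    have hXR : X ⊆ RPerp C U := fun A hA => by
      have h := hX.subset hA; rw [hW] at h; exact h.1
    have hXT : X ⊆ T := fun A hA => by
      have h := hX.subset hA; rw [hW] at h; exact h.2
    have hD := extStar_isTorsionClass hU hT hUT hW hwide hX
    apply Set.Subset.antisymm
    · rintro Y ⟨hYR, hYc⟩
      have hYD : Y ∈ ExtStar C U X := hYc _
        ⟨hD, Set.union_subset (subset_extStar_left hX.zero_mem)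
          (subset_extStar_right hU.zero_mem)⟩
      have hYT : Y ∈ T := torsClosure_min hT (Set.union_subset hUT hXT) hYc
      obtain ⟨U', X', f, g, w, hS, hU', hX'⟩ := extStar_elim hYD
      have hf0 : f = 0 := hYR U' hU' f
      haveI : Mono f := hS.mono_f
      have hzU' : IsZero U' := by
        rw [IsZero.iff_id_eq_zero]
        have h : (𝟙 U') ≫ f = 0 ≫ f := by rw [hf0, comp_zero, zero_comp]
        exact Mono.right_cancellation _ _ h
      haveI : Epi g := hS.epi_g
      haveI : Mono g := Preadditive.mono_of_cancel_zero g (fun h hh => by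
        obtain ⟨l, hl⟩ := KernelFork.IsLimit.lift' hS.exact.fIsKernel h hh
        simp only [Fork.ι_ofι] at hl
        rw [← hl, hzU'.eq_zero_of_tgt l, zero_comp])
      haveI : IsIso g := isIso_of_mono_of_epi g
      exact hX.quot_mem (inv g) inferInstance hX' (by rw [hW]; exact ⟨hYR, hYT⟩)
    · exact fun Y hY => ⟨hXR hY, subset_torsClosure _ (Set.mem_union_right _ hY)⟩
  · -- part 5
    intro V V' hV hUV hVT hV' hUV' hV'T
    constructor
    · exact fun h Y hY => ⟨hY.1, h hY.2⟩
    · intro h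
      calc V = torsClosure C (U ∪ (RPerp C U ∩ V)) := (key3 V hV hUV hVT).symm
        _ ⊆ torsClosure C (U ∪ (RPerp C U ∩ V')) :=
            torsClosure_mono (Set.union_subset_union_right _ h)
        _ = V' := key3 V' hV' hUV' hV'T
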